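/- arXiv:2102.06593 — 2 statements merged into one kernel-verified Lean document; each statement's English description precedes it below -/
import Mathlib

section
/- Fix K ≥ 2 and T ≥ 1. Suppose nonnegative reals R₀,…,R_K, probability measures P₀,…,P_K, and random variables N₁(T),…,N_K(T) with Σᵢ E₀[Nᵢ(T)] ≤ T satisfy: (a) R₀ ≥ (Δ/2)·Σᵢ E₀[Nᵢ(T)]; (b) Rᵢ ≥ (TΔ/2)(1 - Eᵢ[Nᵢ(T)]/T) for all i ∈ [K]; (c) KL(P₀, Pᵢ) = 2 E₀[Nᵢ(T)] Δ²; and (d) R₀ ≤ B with Δ > 0. Then the average (1/K)Σᵢ Rᵢ ≥ (TΔ/2)(1/2 - sqrt(2ΔB/K)). -/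
open MeasureTheory BigOperators Real

/-- The Kullback–Leibler divergence between `P` and `Q` (real-valued). -/
noncomputable def klDiv {Ω : Type*} [MeasurableSpace Ω] (P Q : Measure Ω) : ℝ :=
  ∫ x, Real.log ((P.rnDeriv Q) x).toReal ∂P

lemma F_deriv {y : ℝ} (hy : 0 < y) :
    HasDerivAt (fun y : ℝ => (y+1) * Real.log y - 2*(y-1)) (Real.log y + y⁻¹ - 1) y := by
  have h1 : HasDerivAt (fun y : ℝ => (y+1) * Real.log y) (1 * Real.log y + (y+1) * y⁻¹) y :=
    ((hasDerivAt_id y).add_const 1).mul (Real.hasDerivAt_log hy.ne')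
  have h2 : HasDerivAt (fun y : ℝ => 2*(y-1)) 2 y := by
    simpa using ((hasDerivAt_id y).sub_const 1).const_mul 2
  refine (h1.sub h2).congr_deriv ?_
  rw [add_mul, mul_inv_cancel₀ hy.ne']
  ring

lemma F_deriv_nonneg {y : ℝ} (hy : 0 < y) : 0 ≤ Real.log y + y⁻¹ - 1 := by
  have h := Real.log_le_sub_one_of_pos (show (0:ℝ) < 1/y by positivity)
  rw [Real.log_div one_ne_zero hy.ne'] at h
  simp only [Real.log_one, zero_sub, one_div] at h
  linarith

lemma F_sign_ge {y : ℝ} (hy : 1 ≤ y) : 0 ≤ (y+1) * Real.log y - 2*(y-1) := by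
  set F : ℝ → ℝ := fun y => (y+1) * Real.log y - 2*(y-1) with hF
  have hmono : MonotoneOn F (Set.Ici 1) := by
    apply monotoneOn_of_deriv_nonneg (convex_Ici 1)
    · apply ContinuousOn.sub (ContinuousOn.mul (by fun_prop) ?_) (by fun_prop)
      exact Real.continuousOn_log.mono (by intro x hx; simp at hx ⊢; linarith)
    · intro x hx
      exact (F_deriv (by simp at hx; linarith)).differentiableAt.differentiableWithinAt
    · intro x hx
      simp only [interior_Ici, Set.mem_Ioi] at hx
      rw [(F_deriv (by linarith)).deriv]
      exact F_deriv_nonneg (by linarith)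
  have := hmono (Set.self_mem_Ici) (show y ∈ Set.Ici 1 from hy) hy
  simpa [hF] using this

lemma F_sign_le {y : ℝ} (hy0 : 0 < y) (hy : y ≤ 1) : (y+1) * Real.log y - 2*(y-1) ≤ 0 := by
  set F : ℝ → ℝ := fun y => (y+1) * Real.log y - 2*(y-1) with hF
  have hmono : MonotoneOn F (Set.Ioc 0 1) := by
    apply monotoneOn_of_deriv_nonneg (convex_Ioc 0 1)
    · apply ContinuousOn.sub (ContinuousOn.mul (by fun_prop) ?_) (by fun_prop)
      exact Real.continuousOn_log.mono (by intro x hx; simp at hx ⊢; linarith [hx.1])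
    · intro x hx
      rw [interior_Ioc] at hx
      exact (F_deriv hx.1).differentiableAt.differentiableWithinAt
    · intro x hx
      rw [interior_Ioc] at hx
      rw [(F_deriv hx.1).deriv]
      exact F_deriv_nonneg hx.1
  have := hmono (Set.mem_Ioc.2 ⟨hy0, hy⟩) (Set.mem_Ioc.2 ⟨one_pos, le_refl 1⟩) hy
  simpa [hF] using this

lemma g_deriv {y : ℝ} (hy : 0 < y) :
    HasDerivAt (fun y : ℝ => 2*(y+2)*(y * Real.log y - y + 1) - 3*(y-1)^2)
      (4 * ((y+1) * Real.log y - 2*(y-1))) y := by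
  have h1 : HasDerivAt (fun y : ℝ => 2*(y+2)) 2 y := by
    simpa using ((hasDerivAt_id y).add_const 2).const_mul 2
  have h2 : HasDerivAt (fun y : ℝ => y * Real.log y - y + 1) ((Real.log y + 1) - 1) y :=
    ((Real.hasDerivAt_mul_log hy.ne').sub (hasDerivAt_id y)).add_const 1
  have h3 : HasDerivAt (fun y : ℝ => 3*(y-1)^2) (3*(2*(y-1))) y := by
    simpa using (((hasDerivAt_id y).sub_const 1).pow 2).const_mul 3
  refine ((h1.mul h2).sub h3).congr_deriv ?_
  ring

lemma g_nonneg {y : ℝ} (hy : 0 ≤ y) :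
    0 ≤ 2*(y+2)*(y * Real.log y - y + 1) - 3*(y-1)^2 := by
  set g : ℝ → ℝ := fun y => 2*(y+2)*(y * Real.log y - y + 1) - 3*(y-1)^2 with hg
  have hcont : Continuous g := by
    apply Continuous.sub (Continuous.mul (by fun_prop) ?_) (by fun_prop)
    exact (Real.continuous_mul_log.sub continuous_id).add continuous_const
  have hg1 : g 1 = 0 := by simp [hg]
  rcases le_or_gt 1 y with h | h
  · have hmono : MonotoneOn g (Set.Ici 1) := by
      apply monotoneOn_of_deriv_nonneg (convex_Ici 1) hcont.continuousOn
      · intro x hx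
        simp only [interior_Ici, Set.mem_Ioi] at hx
        exact (g_deriv (by linarith)).differentiableAt.differentiableWithinAt
      · intro x hx
        simp only [interior_Ici, Set.mem_Ioi] at hx
        rw [(g_deriv (by linarith)).deriv]
        have := F_sign_ge hx.le
        linarith
    have := hmono Set.self_mem_Ici (show y ∈ Set.Ici 1 from h) h
    rw [hg1] at this; exact this
  · have hanti : AntitoneOn g (Set.Icc 0 1) := by
      apply antitoneOn_of_deriv_nonpos (convex_Icc 0 1) hcont.continuousOn
      · intro x hx
        rw [interior_Icc] at hx
        exact (g_deriv hx.1).differentiableAt.differentiableWithinAt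
      · intro x hx
        rw [interior_Icc] at hx
        rw [(g_deriv hx.1).deriv]
        have := F_sign_le hx.1 hx.2.le
        linarith
    have := hanti (Set.mem_Icc.2 ⟨hy, h.le⟩) (Set.mem_Icc.2 ⟨zero_le_one, le_refl 1⟩) h.le
    rw [hg1] at this; exact this

/-- Key pointwise inequality for Pinsker. -/
lemma key_ineq {y : ℝ} (hy : 0 ≤ y) :
    3*(y-1)^2 / (2*(y+2)) ≤ y * Real.log y - y + 1 := by
  rw [div_le_iff₀ (by linarith)]
  nlinarith [g_nonneg hy]

open MeasureTheory

lemma pinsker_bound {Ω : Type*} [MeasurableSpace Ω] (P Q : Measure Ω)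
    [IsProbabilityMeasure P] [IsProbabilityMeasure Q] (hac : P ≪ Q)
    (hint : Integrable (fun x => Real.log ((P.rnDeriv Q) x).toReal) P)
    (Z : Ω → ℝ) (hZm : Measurable Z) (hZ : ∀ x, Z x ∈ Set.Icc (0:ℝ) 1) :
    ∫ x, Z x ∂Q - ∫ x, Z x ∂P ≤ Real.sqrt (klDiv P Q / 2) := by
  set f : Ω → ℝ := fun x => ((P.rnDeriv Q) x).toReal with hf
  have hfm : Measurable f := (Measure.measurable_rnDeriv P Q).ennreal_toReal
  have hf0 : ∀ x, 0 ≤ f x := fun x => ENNReal.toReal_nonneg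
  have hfint : Integrable f Q := Measure.integrable_toReal_rnDeriv
  have hfone : ∫ x, f x ∂Q = 1 := by
    rw [hf, Measure.integral_toReal_rnDeriv hac]; simp
  -- change of measure for log f
  have hflog : ∫ x, f x * Real.log (f x) ∂Q = klDiv P Q := by
    rw [klDiv, ← integral_rnDeriv_smul hac]; simp [hf]
  have hflogint : Integrable (fun x => f x * Real.log (f x)) Q := by
    have := (integrable_rnDeriv_smul_iff (f := fun x => Real.log (f x)) hac).mpr hint
    simpa [hf] using this
  -- φ := f log f - f + 1 ≥ 0, integrable, with ∫ φ = KL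
  set φ : Ω → ℝ := fun x => f x * Real.log (f x) - f x + 1 with hφ
  have hsubint : Integrable (fun x => f x * Real.log (f x) - f x) Q := hflogint.sub hfint
  have hφint : Integrable φ Q := hsubint.add (integrable_const 1)
  have hφ0 : ∀ x, 0 ≤ φ x := by
    intro x
    have := key_ineq (hf0 x)
    have h2 : 0 ≤ 3*(f x - 1)^2 / (2*(f x + 2)) := by positivity
    simp only [hφ]; linarith
  have hφsum : ∫ x, φ x ∂Q = klDiv P Q := by
    rw [hφ]
    rw [integral_add hsubint (integrable_const 1),
      integral_sub hflogint hfint, hflog, hfone]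
    simp
  have hKL0 : 0 ≤ klDiv P Q := hφsum ▸ integral_nonneg hφ0
  -- Cauchy–Schwarz: ∫ |f-1| ≤ sqrt(2 KL)
  set a : Ω → ℝ := fun x => |f x - 1| / Real.sqrt ((2/3) * (f x + 2)) with ha
  set b : Ω → ℝ := fun x => Real.sqrt ((2/3) * (f x + 2)) with hb
  have hbpos : ∀ x, 0 < (2/3 : ℝ) * (f x + 2) := fun x => by have := hf0 x; linarith
  have hab : ∀ x, a x * b x = |f x - 1| := by
    intro x
    rw [ha, hb, div_mul_cancel₀]
    exact (Real.sqrt_pos.2 (hbpos x)).ne'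
  have ham : Measurable a := (hfm.sub measurable_const).abs.div
    ((measurable_const.mul (hfm.add measurable_const)).sqrt)
  have hbm : Measurable b := (measurable_const.mul (hfm.add measurable_const)).sqrt
  have hasq : ∀ x, a x ^ 2 = 3*(f x - 1)^2 / (2*(f x + 2)) := by
    intro x
    rw [ha, div_pow, sq_abs, Real.sq_sqrt (hbpos x).le]
    rw [div_eq_div_iff (by linarith [hbpos x]) (by linarith [hf0 x])]
    ring
  have hasqint : Integrable (fun x => a x ^ 2) Q := by
    refine Integrable.mono' (hφint) (ham.pow_const 2).aestronglyMeasurable ?_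
    refine Filter.Eventually.of_forall fun x => ?_
    rw [Real.norm_of_nonneg (sq_nonneg _), hasq x]
    have := key_ineq (hf0 x)
    simpa [hφ] using this
  have hbsq : ∀ x, b x ^ 2 = (2/3) * (f x + 2) := fun x => Real.sq_sqrt (hbpos x).le
  have hbsqint : Integrable (fun x => b x ^ 2) Q := by
    have h : Integrable (fun x => (2/3:ℝ) * (f x + 2)) Q :=
      (hfint.add (integrable_const 2)).const_mul _
    simp only [hbsq]
    exact h
  have hbsqval : ∫ x, b x ^ 2 ∂Q = 2 := by
    simp only [hbsq]
    rw [integral_const_mul, integral_add hfint (integrable_const 2), hfone]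
    simp; norm_num
  have hasqval : ∫ x, a x ^ 2 ∂Q ≤ klDiv P Q := by
    rw [← hφsum]
    refine integral_mono hasqint hφint fun x => ?_
    rw [hasq x]
    have := key_ineq (hf0 x)
    simpa [hφ] using this
  -- apply Hölder with p = q = 2
  have hCS : ∫ x, |f x - 1| ∂Q ≤ Real.sqrt (klDiv P Q) * Real.sqrt 2 := by
    have h22 : Real.HolderConjugate 2 2 := Real.HolderConjugate.two_two
    have hma : MemLp a (ENNReal.ofReal 2) Q := by
      rw [ENNReal.ofReal_ofNat]
      exact (memLp_two_iff_integrable_sq ham.aestronglyMeasurable).2 hasqint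
    have hmb : MemLp b (ENNReal.ofReal 2) Q := by
      rw [ENNReal.ofReal_ofNat]
      exact (memLp_two_iff_integrable_sq hbm.aestronglyMeasurable).2 hbsqint
    have := integral_mul_le_Lp_mul_Lq_of_nonneg h22
      (Filter.Eventually.of_forall fun x => by positivity)
      (Filter.Eventually.of_forall fun x => Real.sqrt_nonneg _) hma hmb
    rw [show (fun x => a x * b x) = fun x => |f x - 1| from funext hab] at this
    calc ∫ x, |f x - 1| ∂Q ≤ (∫ x, a x ^ (2:ℝ) ∂Q) ^ (1/(2:ℝ)) * (∫ x, b x ^ (2:ℝ) ∂Q) ^ (1/(2:ℝ)) := this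
      _ = Real.sqrt (∫ x, a x ^ 2 ∂Q) * Real.sqrt (∫ x, b x ^ 2 ∂Q) := by
          rw [← Real.sqrt_eq_rpow, ← Real.sqrt_eq_rpow]
          norm_num [Real.rpow_natCast]
      _ ≤ Real.sqrt (klDiv P Q) * Real.sqrt 2 := by
          rw [hbsqval]
          exact mul_le_mul_of_nonneg_right (Real.sqrt_le_sqrt hasqval) (Real.sqrt_nonneg 2)
  -- now the expectation bound
  have hZint : Integrable Z Q := by
    refine Integrable.mono' (integrable_const 1) hZm.aestronglyMeasurable ?_
    exact Filter.Eventually.of_forall fun x => by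
      rw [Real.norm_of_nonneg (hZ x).1]; exact (hZ x).2
  have hZP : ∫ x, Z x ∂P = ∫ x, f x * Z x ∂Q := by
    rw [← integral_rnDeriv_smul hac]; simp [hf]
  have hZintP : Integrable Z P := by
    refine Integrable.mono' (integrable_const 1) hZm.aestronglyMeasurable ?_
    exact Filter.Eventually.of_forall fun x => by
      rw [Real.norm_of_nonneg (hZ x).1]; exact (hZ x).2
  have hfZint : Integrable (fun x => f x * Z x) Q := by
    have := (integrable_rnDeriv_smul_iff (f := Z) hac).mpr hZintP
    simpa [hf] using this
  have honesub : Integrable (fun x => 1 - f x) Q := (integrable_const 1).sub hfint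
  have hposint : Integrable (fun x => max (1 - f x) 0) Q := honesub.pos_part
  have step1 : ∫ x, Z x ∂Q - ∫ x, Z x ∂P ≤ ∫ x, max (1 - f x) 0 ∂Q := by
    rw [hZP, ← integral_sub hZint hfZint]
    refine integral_mono (hZint.sub hfZint) hposint fun x => ?_
    rcases le_or_gt (f x) 1 with h | h
    · calc Z x - f x * Z x = Z x * (1 - f x) := by ring
        _ ≤ 1 * (1 - f x) := mul_le_mul_of_nonneg_right (hZ x).2 (by linarith)
        _ ≤ max (1 - f x) 0 := by rw [one_mul]; exact le_max_left _ _
    · calc Z x - f x * Z x = Z x * (1 - f x) := by ring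
        _ ≤ 0 := mul_nonpos_of_nonneg_of_nonpos (hZ x).1 (by linarith)
        _ ≤ max (1 - f x) 0 := le_max_right _ _
  have step2 : ∫ x, max (1 - f x) 0 ∂Q = (1/2) * ∫ x, |f x - 1| ∂Q := by
    have : ∀ x, max (1 - f x) 0 = ((1 - f x) + |f x - 1|) / 2 := by
      intro x
      rw [abs_sub_comm]
      rcases le_or_gt (f x) 1 with h | h
      · rw [max_eq_left (by linarith), abs_of_nonneg (by linarith)]; ring
      · rw [max_eq_right (by linarith), abs_of_nonpos (by linarith)]; ring
    rw [integral_congr_ae (Filter.Eventually.of_forall this)]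
    have habs : Integrable (fun x => |f x - 1|) Q := (hfint.sub (integrable_const 1)).abs
    rw [show (fun x => ((1 - f x) + |f x - 1|) / 2) =
        fun x => ((1 - f x) + |f x - 1|) * (1/2) from funext fun x => by ring]
    rw [integral_mul_const, integral_add honesub habs,
      integral_sub (integrable_const 1) hfint, hfone]
    simp
    ring
  calc ∫ x, Z x ∂Q - ∫ x, Z x ∂P ≤ (1/2) * ∫ x, |f x - 1| ∂Q := by rw [← step2]; exact step1
    _ ≤ (1/2) * (Real.sqrt (klDiv P Q) * Real.sqrt 2) := by linarith [hCS]
    _ = Real.sqrt (klDiv P Q / 2) := by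
        rw [Real.sqrt_div hKL0 2]
        have h2 : Real.sqrt 2 * Real.sqrt 2 = 2 := Real.mul_self_sqrt (by norm_num)
        have h2pos : (0:ℝ) < Real.sqrt 2 := Real.sqrt_pos.2 (by norm_num)
        rw [eq_div_iff h2pos.ne']
        nlinarith [Real.sqrt_nonneg (klDiv P Q)]

/-- **Averaging lemma for the lower bound construction.** Given probability measures
`P₀, P₁, …, P_K`, pull counts `Nᵢ(T) ∈ [0, T]` with `∑ᵢ E₀[Nᵢ(T)] ≤ T`, and regrets
satisfying (a) `R₀ ≥ (Δ/2) ∑ᵢ E₀[Nᵢ(T)]`, (b) `Rᵢ ≥ (TΔ/2)(1 - Eᵢ[Nᵢ(T)]/T)`,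
(c) `KL(P₀, Pᵢ) = 2 E₀[Nᵢ(T)] Δ²`, and (d) `R₀ ≤ B`, with `K ≥ 2` and `Δ > 0`, we get
`(1/K) ∑ᵢ Rᵢ ≥ (TΔ/2)(1/2 - sqrt (2ΔB/K))`. -/
theorem averaging_lower_bound {Ω : Type*} [MeasurableSpace Ω]
    (K : ℕ) (hK : 2 ≤ K) (T Δ B : ℝ) (hT : 1 ≤ T) (hΔ : 0 < Δ)
    (P0 : Measure Ω) (P : Fin K → Measure Ω)
    [IsProbabilityMeasure P0] [∀ i, IsProbabilityMeasure (P i)]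
    (hac : ∀ i, P0 ≪ P i)
    (hint : ∀ i, Integrable (fun x => Real.log ((P0.rnDeriv (P i)) x).toReal) P0)
    (N : Fin K → Ω → ℝ) (hNmeas : ∀ i, Measurable (N i))
    (hNbd : ∀ i, ∀ x, N i x ∈ Set.Icc (0 : ℝ) T)
    (R0 : ℝ) (R : Fin K → ℝ)
    (hsum : ∑ i, ∫ x, N i x ∂P0 ≤ T)
    (ha : R0 ≥ (Δ / 2) * ∑ i, ∫ x, N i x ∂P0)
    (hb : ∀ i, R i ≥ (T * Δ / 2) * (1 - (∫ x, N i x ∂(P i)) / T))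
    (hc : ∀ i, klDiv P0 (P i) = 2 * (∫ x, N i x ∂P0) * Δ ^ 2)
    (hd : R0 ≤ B) :
    (1 / (K : ℝ)) * ∑ i, R i ≥ (T * Δ / 2) * (1 / 2 - Real.sqrt (2 * Δ * B / K)) := by
  have hT0 : (0:ℝ) < T := lt_of_lt_of_le one_pos hT
  have hK0 : (0:ℝ) < K := by positivity
  have hKR : (2:ℝ) ≤ K := by exact_mod_cast hK
  set m : Fin K → ℝ := fun i => ∫ x, N i x ∂P0 with hm
  set e : Fin K → ℝ := fun i => ∫ x, N i x ∂(P i) with he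
  have hm0 : ∀ i, 0 ≤ m i := fun i => integral_nonneg fun x => (hNbd i x).1
  -- Pinsker for each arm
  have hpins : ∀ i, e i / T ≤ m i / T + Δ * Real.sqrt (m i) := by
    intro i
    have hZ : ∀ x, N i x / T ∈ Set.Icc (0:ℝ) 1 := by
      intro x
      constructor
      · exact div_nonneg (hNbd i x).1 hT0.le
      · rw [div_le_one hT0]; exact (hNbd i x).2
    have hp := pinsker_bound P0 (P i) (hac i) (hint i) (fun x => N i x / T)
      ((hNmeas i).div_const T) hZ
    have h1 : ∫ x, N i x / T ∂(P i) = e i / T := by rw [integral_div]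
    have h2 : ∫ x, N i x / T ∂P0 = m i / T := by rw [integral_div]
    rw [h1, h2, hc i] at hp
    have h3 : Real.sqrt (2 * m i * Δ ^ 2 / 2) = Δ * Real.sqrt (m i) := by
      rw [show 2 * m i * Δ ^ 2 / 2 = m i * Δ ^ 2 by ring, Real.sqrt_mul (hm0 i),
        Real.sqrt_sq hΔ.le]
      ring
    rw [h3] at hp
    linarith
  -- sums
  have hmsum0 : 0 ≤ ∑ i, m i := Finset.sum_nonneg fun i _ => hm0 i
  have hmsumB : ∑ i, m i ≤ 2 * B / Δ := by
    rw [le_div_iff₀ hΔ]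
    nlinarith [ha, hd]
  have hB0 : (0:ℝ) ≤ B := by nlinarith [ha, hd]
  -- Jensen / Cauchy-Schwarz for sqrt sum
  have hsqrt : ∑ i, Real.sqrt (m i) ≤ Real.sqrt ((K:ℝ) * ∑ i, m i) := by
    have h1 : (∑ i, Real.sqrt (m i)) ^ 2 ≤ (K:ℝ) * ∑ i, m i := by
      have := sq_sum_le_card_mul_sum_sq (s := Finset.univ) (f := fun i => Real.sqrt (m i))
      simpa [Real.sq_sqrt (hm0 _)] using this
    calc ∑ i, Real.sqrt (m i) = Real.sqrt ((∑ i, Real.sqrt (m i))^2) :=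
          (Real.sqrt_sq (Finset.sum_nonneg fun i _ => Real.sqrt_nonneg _)).symm
      _ ≤ Real.sqrt ((K:ℝ) * ∑ i, m i) := Real.sqrt_le_sqrt h1
  have hkey : (1/(K:ℝ)) * ∑ i, e i / T ≤ 1/2 + Real.sqrt (2 * Δ * B / K) := by
    have h1 : ∑ i, e i / T ≤ ∑ i, m i / T + Δ * ∑ i, Real.sqrt (m i) := by
      rw [Finset.mul_sum]
      calc ∑ i, e i / T ≤ ∑ i, (m i / T + Δ * Real.sqrt (m i)) :=
            Finset.sum_le_sum fun i _ => hpins i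
        _ = ∑ i, m i / T + ∑ i, Δ * Real.sqrt (m i) := Finset.sum_add_distrib
    have h2 : ∑ i, m i / T ≤ 1 := by
      rw [← Finset.sum_div, div_le_one hT0]; exact hsum
    have h3 : Δ * ∑ i, Real.sqrt (m i) ≤ Δ * Real.sqrt ((K:ℝ) * (2 * B / Δ)) := by
      apply mul_le_mul_of_nonneg_left _ hΔ.le
      exact le_trans hsqrt (Real.sqrt_le_sqrt (by nlinarith))
    have h4 : Δ * Real.sqrt ((K:ℝ) * (2 * B / Δ)) = (K:ℝ) * Real.sqrt (2 * Δ * B / K) := by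
      have l1 : Δ * Real.sqrt ((K:ℝ) * (2 * B / Δ)) = Real.sqrt (Δ^2 * ((K:ℝ) * (2*B/Δ))) := by
        rw [Real.sqrt_mul (sq_nonneg Δ), Real.sqrt_sq hΔ.le]
      have l2 : (K:ℝ) * Real.sqrt (2 * Δ * B / K) = Real.sqrt ((K:ℝ)^2 * (2 * Δ * B / K)) := by
        rw [Real.sqrt_mul (sq_nonneg (K:ℝ)), Real.sqrt_sq hK0.le]
      rw [l1, l2]
      congr 1
      field_simp
    have h5 : (1/(K:ℝ)) * ∑ i, e i / T ≤ (1/(K:ℝ)) * (1 + (K:ℝ) * Real.sqrt (2 * Δ * B / K)) := by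
      apply mul_le_mul_of_nonneg_left _ (by positivity)
      calc ∑ i, e i / T ≤ 1 + Δ * ∑ i, Real.sqrt (m i) := by linarith
        _ ≤ 1 + (K:ℝ) * Real.sqrt (2 * Δ * B / K) := by rw [← h4]; linarith
    calc (1/(K:ℝ)) * ∑ i, e i / T ≤ (1/(K:ℝ)) * (1 + (K:ℝ) * Real.sqrt (2 * Δ * B / K)) := h5
      _ = 1/(K:ℝ) + Real.sqrt (2 * Δ * B / K) := by field_simp
      _ ≤ 1/2 + Real.sqrt (2 * Δ * B / K) := by
          have : 1/(K:ℝ) ≤ 1/2 := by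
            rw [div_le_div_iff₀ hK0 two_pos]; linarith
          linarith
  -- conclude
  have hfin : (1/(K:ℝ)) * ∑ i, R i ≥ (T * Δ / 2) * (1 - (1/(K:ℝ)) * ∑ i, e i / T) := by
    have h1 : ∑ i, R i ≥ ∑ i, (T * Δ / 2) * (1 - e i / T) :=
      Finset.sum_le_sum fun i _ => hb i
    have h2 : ∑ i, (T * Δ / 2) * (1 - e i / T) = (T * Δ / 2) * ((K:ℝ) - ∑ i, e i / T) := by
      rw [← Finset.mul_sum]
      congr 1
      rw [Finset.sum_sub_distrib]
      simp [Finset.card_univ]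
    have hTΔ : (0:ℝ) ≤ T * Δ / 2 := by positivity
    have h3 : (1/(K:ℝ)) * ∑ i, R i ≥ (1/(K:ℝ)) * ((T * Δ / 2) * ((K:ℝ) - ∑ i, e i / T)) := by
      apply mul_le_mul_of_nonneg_left _ (by positivity)
      rw [← h2]; exact h1
    calc (1/(K:ℝ)) * ∑ i, R i ≥ (1/(K:ℝ)) * ((T * Δ / 2) * ((K:ℝ) - ∑ i, e i / T)) := h3
      _ = (T * Δ / 2) * (1 - (1/(K:ℝ)) * ∑ i, e i / T) := by
          field_simp
  have hTΔ : (0:ℝ) ≤ T * Δ / 2 := by positivity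
  calc (1/(K:ℝ)) * ∑ i, R i ≥ (T * Δ / 2) * (1 - (1/(K:ℝ)) * ∑ i, e i / T) := hfin
    _ ≥ (T * Δ / 2) * (1 - (1/2 + Real.sqrt (2 * Δ * B / K))) := by
        apply mul_le_mul_of_nonneg_left _ hTΔ
        linarith
    _ = (T * Δ / 2) * (1/2 - Real.sqrt (2 * Δ * B / K)) := by ring
end

section
/- Let no rate function achieved by any algorithm be strictly smaller in pointwise order than θ_β for β ∈ [1/2,1): if θ' is nondecreasing, takes values in [1/2,1], satisfies θ'(α) ≥ min{max{θ'(0), 1+α-θ'(0)}, 1} for all α, and θ'(α) ≤ θ_β(α) for all α ∈ [0,1], then θ' = θ_β. -/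
/-- **Pareto optimality of LinUCB++ (Theorem 4).** Let `θ_β(α) = min (max β (1+α-β)) 1`
for `β ∈ [1/2,1)`. If `θ'` is nondecreasing on `[0,1]`, takes values in `[1/2,1]`,
satisfies the rate lower bound `θ'(α) ≥ min (max (θ' 0) (1 + α - θ' 0)) 1` for all
`α ∈ [0,1]`, and `θ' ≤ θ_β` pointwise on `[0,1]`, then `θ' = θ_β` on `[0,1]`. -/
theorem linucbpp_pareto_optimal (β : ℝ) (hβlb : 1/2 ≤ β) (hβub : β < 1)
    (θ' : ℝ → ℝ)
    (hmono : ∀ a b, 0 ≤ a → a ≤ b → b ≤ 1 → θ' a ≤ θ' b)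
    (hrange : ∀ a ∈ Set.Icc (0 : ℝ) 1, θ' a ∈ Set.Icc (1/2 : ℝ) 1)
    (hlb : ∀ a ∈ Set.Icc (0 : ℝ) 1, min (max (θ' 0) (1 + a - θ' 0)) 1 ≤ θ' a)
    (hle : ∀ a ∈ Set.Icc (0 : ℝ) 1, θ' a ≤ min (max β (1 + a - β)) 1) :
    ∀ a ∈ Set.Icc (0 : ℝ) 1, θ' a = min (max β (1 + a - β)) 1 := by
  have hb0 : θ' 0 ≤ β := by
    have h := hle 0 ⟨le_refl 0, by norm_num⟩
    have h1 : max β (1 + 0 - β) = β := max_eq_left (by linarith)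
    have h2 : min β (1 : ℝ) = β := min_eq_left (le_of_lt hβub)
    rw [h1, h2] at h; exact h
  have heq : θ' 0 = β := by
    by_contra hne
    have hlt : θ' 0 < β := lt_of_le_of_ne hb0 hne
    have ha : (2 * β - 1) ∈ Set.Icc (0 : ℝ) 1 := ⟨by linarith, by linarith⟩
    have h1 := hlb _ ha
    have h2 := hle _ ha
    have e1 : 1 + (2 * β - 1) - β = β := by ring
    rw [e1, max_self, min_eq_left (le_of_lt hβub)] at h2
    have hmax : β < max (θ' 0) (1 + (2 * β - 1) - θ' 0) :=
      lt_max_of_lt_right (by linarith)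
    have : β < min (max (θ' 0) (1 + (2 * β - 1) - θ' 0)) 1 := lt_min hmax hβub
    linarith
  intro a ha
  have h1 := hlb a ha
  rw [heq] at h1
  exact le_antisymm (hle a ha) h1
end
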